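/- Let a, b, c, d : ℝ, set m = (a+d)/2 and h = (a−d)/2, and for τ > 0 let J_τ = !![a, b; τ*c, τ*d]. If det !![a, b; c, d] > 0 and m < |h|, then there exists τ > 0 such that J_τ is Hurwitz. (A fixed point with positive Jacobian determinant and m < |h| can be stabilized by some choice of learning-rate ratio.) -/

import Mathlib

/-- A real matrix is Hurwitz (stable) if every eigenvalue of the matrix,
viewed as a matrix over `ℂ`, has negative real part. -/
def IsHurwitz {n : ℕ} (J : Matrix (Fin n) (Fin n) ℝ) : Prop :=
  ∀ μ ∈ spectrum ℂ (J.map Complex.ofReal), μ.re < 0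

/-- Roots of a real quadratic `μ² - tμ + Δ` with `t < 0 < Δ` have negative real part. -/
lemma quad_root_re_neg (t Δ : ℝ) (ht : t < 0) (hΔ : 0 < Δ) (μ : ℂ)
    (hroot : μ ^ 2 - (t : ℂ) * μ + (Δ : ℂ) = 0) : μ.re < 0 := by
  set x := μ.re with hx
  set y := μ.im with hy
  have hre : x ^ 2 - y ^ 2 - t * x + Δ = 0 := by
    have := congrArg Complex.re hroot
    simp [Complex.add_re, Complex.sub_re, Complex.mul_re, pow_two] at this
    nlinarith [this]
  have him : y * (2 * x - t) = 0 := by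
    have := congrArg Complex.im hroot
    simp [Complex.add_im, Complex.sub_im, Complex.mul_im, pow_two] at this
    nlinarith [this]
  rcases mul_eq_zero.mp him with h0 | h0
  · -- real root
    rw [h0] at hre
    by_contra hxx
    push_neg at hxx
    nlinarith
  · -- complex pair, x = t/2
    have : x = t / 2 := by linarith
    rw [this]; linarith

/-- A real 2×2 matrix with negative trace and positive determinant is Hurwitz. -/
lemma hurwitz_of_trace_det (A : Matrix (Fin 2) (Fin 2) ℝ)
    (htr : A 0 0 + A 1 1 < 0) (hdet : 0 < A.det) : IsHurwitz A := by
  intro μ hμ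
  have hdet0 : Matrix.det ((algebraMap ℂ (Matrix (Fin 2) (Fin 2) ℂ) μ) - A.map Complex.ofReal) = 0 := by
    rw [spectrum.mem_iff] at hμ
    by_contra hd
    exact hμ ((Matrix.isUnit_iff_isUnit_det _).mpr (isUnit_iff_ne_zero.mpr hd))
  have hdet2 : A.det = A 0 0 * A 1 1 - A 0 1 * A 1 0 := Matrix.det_fin_two A
  have hroot : μ ^ 2 - ((A 0 0 + A 1 1 : ℝ) : ℂ) * μ + ((A.det : ℝ) : ℂ) = 0 := by
    rw [← hdet0]
    simp [Matrix.det_fin_two, Matrix.algebraMap_matrix_apply, hdet2, Matrix.map_apply]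
    ring
  exact quad_root_re_neg _ _ htr hdet _ hroot

theorem nonNash_stabilized (a b c d m h : ℝ)
    (hm : m = (a + d) / 2) (hh : h = (a - d) / 2)
    (hdet : Matrix.det !![a, b; c, d] > 0) (hmh : m < |h|) :
    ∃ τ : ℝ, τ > 0 ∧ IsHurwitz !![a, b; τ * c, τ * d] := by
  rw [Matrix.det_fin_two_of] at hdet
  have hmin : a < 0 ∨ d < 0 := by
    rcases abs_cases h with ⟨h1, _⟩ | ⟨h1, _⟩ <;> rw [h1] at hmh
    · right; rw [hm, hh] at hmh; linarith
    · left; rw [hm, hh] at hmh; linarith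
  -- choose τ
  obtain ⟨τ, hτ, htr⟩ : ∃ τ : ℝ, 0 < τ ∧ a + τ * d < 0 := by
    rcases hmin with ha | hd
    · have hpos : 0 < -a / (2 * (|d| + 1)) := div_pos (by linarith) (by positivity)
      refine ⟨-a / (2 * (|d| + 1)), hpos, ?_⟩
      have h1 : 0 < |d| + 1 := by positivity
      have h2 : (-a / (2 * (|d| + 1))) * d ≤ (-a / (2 * (|d| + 1))) * |d| :=
        mul_le_mul_of_nonneg_left (le_abs_self d) hpos.le
      have h3 : (-a / (2 * (|d| + 1))) * |d| ≤ -a / 2 := by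
        rw [div_mul_eq_mul_div, div_le_div_iff₀ (by positivity) (by norm_num)]
        nlinarith [abs_nonneg d]
      linarith
    · have hd0 : -d ≠ 0 := by linarith
      refine ⟨(|a| + 1) / (-d), div_pos (by positivity) (by linarith), ?_⟩
      have : (|a| + 1) / (-d) * d = -(|a| + 1) := by
        field_simp
        ring_nf; simp [show d ≠ 0 by linarith]
      rw [this]
      have := le_abs_self a
      linarith
  refine ⟨τ, hτ, ?_⟩
  apply hurwitz_of_trace_det
  · simpa using htr
  · rw [Matrix.det_fin_two_of]
    nlinarith
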